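/- If a quantum principal bundle P(B,A) admits a cross section s : P → B which is an algebra map, then Φ = mult ∘ (s ⊗_B id) ∘ τ : A → P is a trivialisation (convolution invertible intertwiner with Φ(1)=1), and Θ = (s ⊗ id) ∘ Δ_R : P → B ⊗ A is an algebra isomorphism with inverse b ⊗ a ↦ b s(τ⁽¹⁾(a)) τ⁽²⁾(a). -/

import Mathlib

open TensorProduct
set_option maxHeartbeats 1000000
set_option synthInstance.maxHeartbeats 200000

noncomputable section

variable (k : Type*) [Field k]

/-- Convolution product of linear maps from a coalgebra to an algebra:
`(f * g)(a) = f(a₁) g(a₂)`. -/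
def conv {C B : Type*} [AddCommMonoid C] [Module k C] [Coalgebra k C]
    [Semiring B] [Algebra k B] (f g : C →ₗ[k] B) : C →ₗ[k] B :=
  LinearMap.mul' k B ∘ₗ TensorProduct.map f g ∘ₗ Coalgebra.comul

/-- The convolution unit `a ↦ ε(a) 1`. -/
def convOne {C B : Type*} [AddCommMonoid C] [Module k C] [Coalgebra k C]
    [Semiring B] [Algebra k B] : C →ₗ[k] B :=
  Algebra.linearMap k B ∘ₗ Coalgebra.counit

variable (A P : Type*) [Ring A] [HopfAlgebra k A] [Ring P] [Algebra k P]

/-- The canonical map `χ : P ⊗ P → P ⊗ A`, `u ⊗ v ↦ u v⁽¹⁾ ⊗ v⁽²⁾`,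
i.e. `χ = (mult ⊗ id) ∘ (id ⊗ Δ_R)`. -/
def chiMap (ΔR : P →ₗ[k] P ⊗[k] A) : P ⊗[k] P →ₗ[k] P ⊗[k] A :=
  TensorProduct.map (LinearMap.mul' k P) LinearMap.id ∘ₗ
    (TensorProduct.assoc k P P A).symm.toLinearMap ∘ₗ
    TensorProduct.map LinearMap.id ΔR

/-- The right adjoint coaction `Ad(a) = a₂ ⊗ S(a₁)a₃`. -/
def adCoaction : A →ₗ[k] A ⊗[k] A :=
  TensorProduct.map LinearMap.id (LinearMap.mul' k A) ∘ₗ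
    (TensorProduct.leftComm k A A A).toLinearMap ∘ₗ
    TensorProduct.map (HopfAlgebra.antipode (R := k)) LinearMap.id ∘ₗ
    TensorProduct.map LinearMap.id Coalgebra.comul ∘ₗ Coalgebra.comul

/-- The kernel of `P ⊗ P → P ⊗_B P`: the span of elements `u b ⊗ v - u ⊗ b v`
with `b` a coinvariant (`Δ_R b = b ⊗ 1`), so that `P ⊗_B P = (P ⊗ P) ⧸ relSub`. -/
def relSub (ΔR : P →ₗ[k] P ⊗[k] A) : Submodule k (P ⊗[k] P) :=
  Submodule.span k {x | ∃ u v b : P, ΔR b = b ⊗ₜ 1 ∧ x = (u * b) ⊗ₜ v - u ⊗ₜ (b * v)}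

/-- The image of `B ⊗ B` in `P ⊗ P`, where `B = Pᴬ` is the coinvariant subalgebra. -/
def BBsub (ΔR : P →ₗ[k] P ⊗[k] A) : Submodule k (P ⊗[k] P) :=
  Submodule.span k {x | ∃ b c : P, ΔR b = b ⊗ₜ 1 ∧ ΔR c = c ⊗ₜ 1 ∧ x = b ⊗ₜ c}

/-- The submodule `P B² P ⊆ P ⊗ P`, where `B² = ker(mult : B ⊗ B → B)`. -/
def PB2P (ΔR : P →ₗ[k] P ⊗[k] A) : Submodule k (P ⊗[k] P) :=
  Submodule.span k {w | ∃ u v : P, ∃ x ∈ BBsub k A P ΔR ⊓ LinearMap.ker (LinearMap.mul' k P),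
    w = TensorProduct.map (LinearMap.mulLeft k u) (LinearMap.mulRight k v) x}

-- auxiliary general lemma
lemma ker_inf_rTensor {k : Type*} [Field k] {M M₁ M₂ M₃ N : Type*}
    [AddCommGroup M] [AddCommGroup M₁] [AddCommGroup M₂] [AddCommGroup M₃] [AddCommGroup N]
    [Module k M] [Module k M₁] [Module k M₂] [Module k M₃] [Module k N]
    (f : M →ₗ[k] M₁) (g : M →ₗ[k] M₂) (h : M →ₗ[k] M₃)
    (H : LinearMap.ker f ⊓ LinearMap.ker g ≤ LinearMap.ker h) :
    LinearMap.ker (f.rTensor N) ⊓ LinearMap.ker (g.rTensor N) ≤ LinearMap.ker (h.rTensor N) := by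
  intro x hx
  obtain ⟨hx1, hx2⟩ := hx
  set K := LinearMap.ker f ⊓ LinearMap.ker g with hK
  have hex : Function.Exact K.subtype (f.prod g) := by
    rw [LinearMap.exact_iff, Submodule.range_subtype, LinearMap.ker_prod]
  have hexT := Module.Flat.rTensor_exact (R := k) N hex
  have hzero : (f.prod g).rTensor N x = 0 := by
    have hprod : (f.prod g) = (LinearMap.inl k M₁ M₂ ∘ₗ f) + (LinearMap.inr k M₁ M₂ ∘ₗ g) := by
      ext m <;> simp
    rw [hprod, LinearMap.rTensor_add, LinearMap.add_apply, LinearMap.rTensor_comp,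
      LinearMap.rTensor_comp]
    simp only [LinearMap.coe_comp, Function.comp_apply]
    rw [LinearMap.mem_ker.mp hx1, LinearMap.mem_ker.mp hx2]
    simp
  obtain ⟨y, hy⟩ := (hexT x).mp hzero
  have hcomp : h ∘ₗ K.subtype = 0 := by
    ext z
    exact H z.2
  rw [LinearMap.mem_ker, ← hy, ← LinearMap.comp_apply, ← LinearMap.rTensor_comp, hcomp]
  simp

section Aux

variable {k A P}
variable (ΔR : P →ₗ[k] P ⊗[k] A)

lemma chi_tmul (u v : P) :
    chiMap k A P ΔR (u ⊗ₜ v) = (LinearMap.mulLeft k u).rTensor A (ΔR v) := by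
  simp only [chiMap, LinearMap.coe_comp, Function.comp_apply, TensorProduct.map_tmul,
    LinearMap.id_coe, id_eq, LinearEquiv.coe_coe]
  generalize ΔR v = w
  induction w using TensorProduct.induction_on with
  | zero => rw [tmul_zero, LinearEquiv.map_zero, map_zero, map_zero]
  | tmul p a => simp [TensorProduct.assoc_symm_tmul, LinearMap.mul'_apply]
  | add x y hx hy => simp only [tmul_add, map_add, hx, hy]

end Aux

/-- Proposition 4.6 (second part): if a quantum principal bundle `P(B,A)` admits a
cross section `s : P → B` which is an algebra map, then `Φ = mult ∘ (s ⊗_B id) ∘ τ`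
is a trivialisation (a unital convolution invertible intertwiner), and
`Θ = (s ⊗ id) ∘ Δ_R : P → B ⊗ A` is an algebra isomorphism onto `B ⊗ A` with inverse
`b ⊗ a ↦ b s(τ⁽¹⁾(a)) τ⁽²⁾(a)`.  Here `σ` is any lift of the translation map `τ`. -/
theorem algebra_section_implies_trivial
    (ΔR : P →ₗ[k] P ⊗[k] A)
    (hcounit : ∀ u : P, TensorProduct.map LinearMap.id Coalgebra.counit (ΔR u) = u ⊗ₜ (1 : k))
    (hcoassoc : ∀ u : P, TensorProduct.map ΔR LinearMap.id (ΔR u)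
      = (TensorProduct.assoc k P A A).symm (TensorProduct.map LinearMap.id Coalgebra.comul (ΔR u)))
    (hone : ΔR 1 = 1)
    (hmul : ∀ u v : P, ΔR (u * v) = ΔR u * ΔR v)
    (hfree : Function.Surjective (chiMap k A P ΔR))
    (hexact : LinearMap.ker (chiMap k A P ΔR) ⊓ LinearMap.ker (LinearMap.mul' k P)
      = PB2P k A P ΔR)
    (σ : A →ₗ[k] P ⊗[k] P)
    (hσ : ∀ a : A, chiMap k A P ΔR (σ a) = (1 : P) ⊗ₜ a)
    (s : P →ₐ[k] P)
    (hsB : ∀ u : P, ΔR (s u) = s u ⊗ₜ 1)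
    (hsmod : ∀ b : P, ΔR b = b ⊗ₜ 1 → ∀ u : P, s (b * u) = b * s u) :
    (LinearMap.mul' k P ∘ₗ TensorProduct.map s.toLinearMap LinearMap.id ∘ₗ σ) 1 = 1 ∧
    (∀ a : A,
      ΔR ((LinearMap.mul' k P ∘ₗ TensorProduct.map s.toLinearMap LinearMap.id ∘ₗ σ) a)
        = TensorProduct.map
            (LinearMap.mul' k P ∘ₗ TensorProduct.map s.toLinearMap LinearMap.id ∘ₗ σ)
            LinearMap.id (Coalgebra.comul a)) ∧
    (∃ Φinv : A →ₗ[k] P,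
      conv k (LinearMap.mul' k P ∘ₗ TensorProduct.map s.toLinearMap LinearMap.id ∘ₗ σ)
          Φinv = convOne k ∧
      conv k Φinv
          (LinearMap.mul' k P ∘ₗ TensorProduct.map s.toLinearMap LinearMap.id ∘ₗ σ)
        = convOne k) ∧
    (∀ u : P,
      TensorProduct.map s.toLinearMap LinearMap.id (ΔR u)
        ∈ LinearMap.range
            ((LinearMap.ker
              (ΔR - (TensorProduct.mk k P A).flip 1)).subtype.rTensor A)) ∧
    (∀ u : P,
      (LinearMap.mul' k P ∘ₗ
        TensorProduct.map LinearMap.id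
          (LinearMap.mul' k P ∘ₗ TensorProduct.map s.toLinearMap LinearMap.id ∘ₗ σ))
        (TensorProduct.map s.toLinearMap LinearMap.id (ΔR u)) = u) ∧
    (∀ (b : P), ΔR b = b ⊗ₜ 1 → ∀ a : A,
      TensorProduct.map s.toLinearMap LinearMap.id
        (ΔR (b * (LinearMap.mul' k P ∘ₗ
            TensorProduct.map s.toLinearMap LinearMap.id ∘ₗ σ) a))
        = b ⊗ₜ a) := by
  classical
  set μ : P ⊗[k] P →ₗ[k] P := LinearMap.mul' k P with hμdef
  set χ : P ⊗[k] P →ₗ[k] P ⊗[k] A := chiMap k A P ΔR with hχdef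
  set L : P ⊗[k] P →ₗ[k] P :=
    LinearMap.mul' k P ∘ₗ TensorProduct.map s.toLinearMap LinearMap.id with hLdef
  have hΦdef : (LinearMap.mul' k P ∘ₗ TensorProduct.map s.toLinearMap LinearMap.id ∘ₗ σ)
      = L ∘ₗ σ := by rw [hLdef, LinearMap.comp_assoc]
  rw [hΦdef]
  set Φ : A →ₗ[k] P := L ∘ₗ σ with hΦ
  have hΦa : ∀ a, Φ a = L (σ a) := fun a => rfl
  have hL_tmul : ∀ u v : P, L (u ⊗ₜ v) = s u * v := by
    intro u v
    simp [hLdef, LinearMap.mul'_apply]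
  -- s is identity on coinvariants
  have h_sB : ∀ b : P, ΔR b = b ⊗ₜ 1 → s b = b := by
    intro b hb
    have := hsmod b hb 1
    simpa using this
  -- L kills ker χ ⊓ ker μ
  have hNL : LinearMap.ker χ ⊓ LinearMap.ker μ ≤ LinearMap.ker L := by
    rw [hχdef, hμdef, hexact]
    rw [PB2P, Submodule.span_le]
    rintro w ⟨u, v, x, ⟨hxBB, hxker⟩, rfl⟩
    have key : ∀ y ∈ BBsub k A P ΔR,
        L (TensorProduct.map (LinearMap.mulLeft k u) (LinearMap.mulRight k v) y)
          = s u * LinearMap.mul' k P y * v := by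
      intro y hy
      induction hy using Submodule.span_induction with
      | mem z hz =>
        obtain ⟨b, c, hb, hc, rfl⟩ := hz
        simp only [TensorProduct.map_tmul, LinearMap.mulLeft_apply, LinearMap.mulRight_apply,
          hL_tmul, LinearMap.mul'_apply]
        rw [map_mul, h_sB b hb, mul_assoc, mul_assoc, mul_assoc]
      | zero => simp
      | add y z _ _ hy hz => simp only [map_add, hy, hz, add_mul, mul_add]
      | smul c y _ hy => simp only [map_smul, hy, smul_mul_assoc, mul_smul_comm]
    simp only [SetLike.mem_coe, LinearMap.mem_ker]
    rw [key x hxBB, LinearMap.mem_ker.mp hxker]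
    simp
  have hchi : ∀ u v : P, χ (u ⊗ₜ v) = (LinearMap.mulLeft k u).rTensor A (ΔR v) :=
    fun u v => chi_tmul ΔR u v
  have hrid : ∀ x : P ⊗[k] P,
      (TensorProduct.rid k P) (TensorProduct.map LinearMap.id Coalgebra.counit (χ x)) = μ x := by
    intro x
    induction x using TensorProduct.induction_on with
    | zero => simp
    | tmul u v =>
      rw [hchi]
      have h1 : ∀ w : P ⊗[k] A,
          TensorProduct.map LinearMap.id Coalgebra.counit ((LinearMap.mulLeft k u).rTensor A w)
            = (LinearMap.mulLeft k u).rTensor k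
                (TensorProduct.map LinearMap.id Coalgebra.counit w) := by
        intro w
        induction w using TensorProduct.induction_on with
        | zero => simp
        | tmul p a => simp
        | add y z hy hz => simp only [map_add, hy, hz]
      rw [h1, hcounit v]
      simp [hμdef, LinearMap.mul'_apply]
    | add y z hy hz => simp only [map_add, hy, hz]
  have hμσ : ∀ a : A, μ (σ a) = algebraMap k P (Coalgebra.counit a) := by
    intro a
    rw [← hrid (σ a), hσ a]
    simp [Algebra.algebraMap_eq_smul_one]
  have hΦ1 : Φ 1 = 1 := by
    have hd : σ 1 - (1 : P) ⊗ₜ (1 : P) ∈ LinearMap.ker χ ⊓ LinearMap.ker μ := by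
      refine Submodule.mem_inf.mpr ⟨?_, ?_⟩
      · show χ (σ 1 - (1 : P) ⊗ₜ (1 : P)) = 0
        rw [map_sub, hσ, hchi, hone, Algebra.TensorProduct.one_def]
        simp
      · show μ (σ 1 - (1 : P) ⊗ₜ (1 : P)) = 0
        rw [map_sub, hμσ]
        simp [hμdef, LinearMap.mul'_apply]
    have hthis := hNL hd
    rw [LinearMap.mem_ker, map_sub, sub_eq_zero] at hthis
    rw [hΦa, hthis, hL_tmul]
    simp
  have hs'mem : ∀ u : P, s u ∈ LinearMap.ker (ΔR - (TensorProduct.mk k P A).flip 1) := by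
    intro u
    rw [LinearMap.mem_ker, LinearMap.sub_apply, sub_eq_zero, hsB]
    rfl
  have clause4 : ∀ u : P, TensorProduct.map s.toLinearMap LinearMap.id (ΔR u)
      ∈ LinearMap.range
        ((LinearMap.ker (ΔR - (TensorProduct.mk k P A).flip 1)).subtype.rTensor A) := by
    intro u
    refine ⟨(s.toLinearMap.codRestrict _ (fun c => show s.toLinearMap c ∈ LinearMap.ker (ΔR - (TensorProduct.mk k P A).flip 1) from hs'mem c)).rTensor A (ΔR u), ?_⟩
    rw [← LinearMap.comp_apply, ← LinearMap.rTensor_comp, LinearMap.subtype_comp_codRestrict]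
    rfl
  -- the map G : P ⊗ A → P ⊗ P, u ⊗ a ↦ u σ¹(a) ⊗ σ²(a)
  set G : P ⊗[k] A →ₗ[k] P ⊗[k] P :=
    TensorProduct.map μ LinearMap.id ∘ₗ (TensorProduct.assoc k P P P).symm.toLinearMap
      ∘ₗ σ.lTensor P with hGdef
  have hG_tmul : ∀ (u : P) (a : A), G (u ⊗ₜ a) = (LinearMap.mulLeft k u).rTensor P (σ a) := by
    intro u a
    simp only [hGdef, LinearMap.coe_comp, Function.comp_apply, LinearMap.lTensor_tmul,
      LinearEquiv.coe_coe]
    generalize σ a = w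
    induction w using TensorProduct.induction_on with
    | zero => rw [tmul_zero, LinearEquiv.map_zero, map_zero, map_zero]
    | tmul p q => simp [TensorProduct.assoc_symm_tmul, hμdef, LinearMap.mul'_apply]
    | add x y hx hy => simp only [tmul_add, map_add, hx, hy]
  have hmulLeft_comp : ∀ u w : P,
      LinearMap.mulLeft k (u * w) = LinearMap.mulLeft k u ∘ₗ LinearMap.mulLeft k w := by
    intro u w
    ext p
    simp [mul_assoc]
  have hχmulLeft : ∀ (u : P) (x : P ⊗[k] P),
      χ ((LinearMap.mulLeft k u).rTensor P x) = (LinearMap.mulLeft k u).rTensor A (χ x) := by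
    intro u x
    induction x using TensorProduct.induction_on with
    | zero => simp
    | tmul w v =>
      rw [LinearMap.rTensor_tmul, hchi, hchi, LinearMap.mulLeft_apply, hmulLeft_comp,
        LinearMap.rTensor_comp, LinearMap.comp_apply]
    | add x y hx hy => simp only [map_add, hx, hy]
  have hχG : ∀ w : P ⊗[k] A, χ (G w) = w := by
    intro w
    induction w using TensorProduct.induction_on with
    | zero => simp
    | tmul u a =>
      rw [hG_tmul, hχmulLeft, hσ]
      simp
    | add x y hx hy => simp only [map_add, hx, hy]
  have hμmulLeft : ∀ (u : P) (x : P ⊗[k] P),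
      μ ((LinearMap.mulLeft k u).rTensor P x) = u * μ x := by
    intro u x
    induction x using TensorProduct.induction_on with
    | zero => simp
    | tmul p q => simp [hμdef, LinearMap.mul'_apply, mul_assoc]
    | add x y hx hy => simp only [map_add, hx, hy, mul_add]
  have hμG : ∀ w : P ⊗[k] A,
      μ (G w) = (TensorProduct.rid k P) (TensorProduct.map LinearMap.id Coalgebra.counit w) := by
    intro w
    induction w using TensorProduct.induction_on with
    | zero => simp
    | tmul u a =>
      rw [hG_tmul, hμmulLeft, hμσ]
      simp [TensorProduct.rid_tmul, Algebra.smul_def, Algebra.commutes]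
    | add x y hx hy => simp only [map_add, hx, hy]
  have hLmulLeft : ∀ (u : P) (x : P ⊗[k] P),
      L ((LinearMap.mulLeft k u).rTensor P x) = s u * L x := by
    intro u x
    induction x using TensorProduct.induction_on with
    | zero => simp
    | tmul p q => simp [hL_tmul, map_mul, mul_assoc]
    | add x y hx hy => simp only [map_add, hx, hy, mul_add]
  have hGker : ∀ u : P, G (ΔR u) - (1 : P) ⊗ₜ u ∈ LinearMap.ker χ ⊓ LinearMap.ker μ := by
    intro u
    refine Submodule.mem_inf.mpr ⟨?_, ?_⟩
    · show χ _ = 0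
      rw [map_sub, hχG, hchi, sub_eq_zero]
      simp
    · show μ _ = 0
      rw [map_sub, hμG, hcounit, sub_eq_zero]
      simp [hμdef, LinearMap.mul'_apply]
  have hLG : ∀ u : P, L (G (ΔR u)) = u := by
    intro u
    have h0 := hNL (hGker u)
    rw [LinearMap.mem_ker, map_sub, sub_eq_zero] at h0
    rw [h0, hL_tmul, map_one, one_mul]
  have clause5 : ∀ u : P,
      (μ ∘ₗ TensorProduct.map LinearMap.id Φ)
        (TensorProduct.map s.toLinearMap LinearMap.id (ΔR u)) = u := by
    intro u
    have key : ∀ w : P ⊗[k] A,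
        μ (TensorProduct.map LinearMap.id Φ (TensorProduct.map s.toLinearMap LinearMap.id w))
          = L (G w) := by
      intro w
      induction w using TensorProduct.induction_on with
      | zero => simp
      | tmul p a =>
        rw [hG_tmul, hLmulLeft]
        simp [hμdef, LinearMap.mul'_apply, hΦa]
      | add x y hx hy => simp only [map_add, hx, hy]
    rw [LinearMap.comp_apply, key, hLG]
  -- D : P ⊗ P → (P ⊗ P) ⊗ A, u ⊗ v ↦ (u ⊗ v⁽¹⁾) ⊗ v⁽²⁾
  set D : P ⊗[k] P →ₗ[k] (P ⊗[k] P) ⊗[k] A :=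
    (TensorProduct.assoc k P P A).symm.toLinearMap ∘ₗ ΔR.lTensor P with hDdef
  have hD_tmul : ∀ u v : P, D (u ⊗ₜ v) = (TensorProduct.assoc k P P A).symm (u ⊗ₜ ΔR v) := by
    intro u v
    simp [hDdef]
  have haux1 : ∀ (p : P) (w : P ⊗[k] A),
      ((p ⊗ₜ (1 : A) : P ⊗[k] A)) * w = (LinearMap.mulLeft k p).rTensor A w := by
    intro p w
    induction w using TensorProduct.induction_on with
    | zero => simp
    | tmul q a => simp [Algebra.TensorProduct.tmul_mul_tmul]
    | add x y hx hy => simp only [mul_add, map_add, hx, hy]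
  have haux2 : ∀ (u : P) (w : P ⊗[k] A),
      L.rTensor A ((TensorProduct.assoc k P P A).symm (u ⊗ₜ w))
        = (LinearMap.mulLeft k (s u)).rTensor A w := by
    intro u w
    induction w using TensorProduct.induction_on with
    | zero => rw [tmul_zero, LinearEquiv.map_zero, map_zero, map_zero]
    | tmul q a => simp [TensorProduct.assoc_symm_tmul, hL_tmul]
    | add x y hx hy => simp only [tmul_add, map_add, hx, hy]
  have hDL : ∀ x : P ⊗[k] P, ΔR (L x) = L.rTensor A (D x) := by
    intro x
    induction x using TensorProduct.induction_on with
    | zero => simp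
    | tmul u v =>
      rw [hD_tmul, haux2, hL_tmul, hmul, hsB, haux1]
    | add x y hx hy => simp only [map_add, hx, hy]
  -- χ.rTensor ∘ D = assoc⁻¹ ∘ comul.lTensor ∘ χ
  have hstep1 : ∀ (u : P) (w : P ⊗[k] A),
      χ.rTensor A ((TensorProduct.assoc k P P A).symm (u ⊗ₜ w))
        = (((LinearMap.mulLeft k u).rTensor A).rTensor A)
            (TensorProduct.map ΔR LinearMap.id w) := by
    intro u w
    induction w using TensorProduct.induction_on with
    | zero => rw [tmul_zero, LinearEquiv.map_zero, map_zero, map_zero, map_zero]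
    | tmul p a => simp [TensorProduct.assoc_symm_tmul, hchi]
    | add x y hx hy => simp only [tmul_add, map_add, hx, hy]
  have hstep2 : ∀ (u p : P) (z : A ⊗[k] A),
      (TensorProduct.assoc k P A A).symm ((u * p) ⊗ₜ z)
        = (((LinearMap.mulLeft k u).rTensor A).rTensor A)
            ((TensorProduct.assoc k P A A).symm (p ⊗ₜ z)) := by
    intro u p z
    induction z using TensorProduct.induction_on with
    | zero => simp only [tmul_zero, LinearEquiv.map_zero, map_zero]
    | tmul a b => simp [TensorProduct.assoc_symm_tmul]
    | add x y hx hy => simp only [tmul_add, map_add, hx, hy]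
  have hstep3 : ∀ (u : P) (w : P ⊗[k] A),
      (TensorProduct.assoc k P A A).symm
          (TensorProduct.map LinearMap.id Coalgebra.comul ((LinearMap.mulLeft k u).rTensor A w))
        = (((LinearMap.mulLeft k u).rTensor A).rTensor A)
            ((TensorProduct.assoc k P A A).symm
              (TensorProduct.map LinearMap.id Coalgebra.comul w)) := by
    intro u w
    induction w using TensorProduct.induction_on with
    | zero => simp only [map_zero, LinearEquiv.map_zero]
    | tmul p a =>
      simp only [LinearMap.rTensor_tmul, TensorProduct.map_tmul, LinearMap.mulLeft_apply,
        LinearMap.id_coe, id_eq]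
      rw [hstep2]
    | add x y hx hy => simp only [map_add, hx, hy]
  have hχD : ∀ x : P ⊗[k] P, χ.rTensor A (D x)
      = (TensorProduct.assoc k P A A).symm
          (TensorProduct.map LinearMap.id Coalgebra.comul (χ x)) := by
    intro x
    induction x using TensorProduct.induction_on with
    | zero => simp
    | tmul u v =>
      rw [hD_tmul, hstep1, hcoassoc, hchi, hstep3]
    | add x y hx hy => simp only [map_add, hx, hy]
  have hμD : ∀ x : P ⊗[k] P, μ.rTensor A (D x) = χ x := by
    intro x
    induction x using TensorProduct.induction_on with
    | zero => simp
    | tmul u v =>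
      rw [hD_tmul, hchi]
      generalize ΔR v = w
      induction w using TensorProduct.induction_on with
      | zero => rw [tmul_zero, LinearEquiv.map_zero, map_zero, map_zero]
      | tmul p a => simp [TensorProduct.assoc_symm_tmul, hμdef, LinearMap.mul'_apply]
      | add x y hx hy => simp only [tmul_add, map_add, hx, hy]
    | add x y hx hy => simp only [map_add, hx, hy]
  have haux3 : ∀ z : A ⊗[k] A,
      (TensorProduct.assoc k P A A).symm ((1 : P) ⊗ₜ z)
        = ((TensorProduct.mk k P A) 1).rTensor A z := by
    intro z
    induction z using TensorProduct.induction_on with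
    | zero => rw [tmul_zero, LinearEquiv.map_zero, map_zero]
    | tmul a b => simp [TensorProduct.assoc_symm_tmul]
    | add x y hx hy => simp only [tmul_add, map_add, hx, hy]
  have clause2 : ∀ a : A,
      ΔR (Φ a) = TensorProduct.map Φ LinearMap.id (Coalgebra.comul a) := by
    intro a
    have hY : D (σ a) - σ.rTensor A (Coalgebra.comul a)
        ∈ LinearMap.ker (χ.rTensor A) ⊓ LinearMap.ker (μ.rTensor A) := by
      refine Submodule.mem_inf.mpr ⟨?_, ?_⟩
      · show χ.rTensor A _ = 0
        rw [map_sub, hχD, hσ, sub_eq_zero, ← LinearMap.comp_apply (χ.rTensor A),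
          ← LinearMap.rTensor_comp]
        have hχσ : χ ∘ₗ σ = (TensorProduct.mk k P A) 1 := LinearMap.ext fun b => hσ b
        rw [hχσ, TensorProduct.map_tmul, LinearMap.id_coe, id_eq, haux3]
      · show μ.rTensor A _ = 0
        rw [map_sub, hμD, hσ, sub_eq_zero, ← LinearMap.comp_apply (μ.rTensor A),
          ← LinearMap.rTensor_comp]
        have hμσ' : μ ∘ₗ σ = Algebra.linearMap k P ∘ₗ Coalgebra.counit :=
          LinearMap.ext fun b => hμσ b
        rw [hμσ', LinearMap.rTensor_comp, LinearMap.comp_apply,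
          Coalgebra.rTensor_counit_comul, LinearMap.rTensor_tmul]
        simp
    have h2 := ker_inf_rTensor χ μ L hNL hY
    rw [LinearMap.mem_ker, map_sub, sub_eq_zero] at h2
    have hmapΦ : TensorProduct.map Φ LinearMap.id (Coalgebra.comul a)
        = L.rTensor A (σ.rTensor A (Coalgebra.comul a)) := by
      rw [← LinearMap.comp_apply (L.rTensor A) (σ.rTensor A), ← LinearMap.rTensor_comp, hΦ]
      rfl
    rw [hΦa, hDL (σ a), h2, hmapΦ]
  -- s ∘ L = s ∘ μ
  have hsL : ∀ x : P ⊗[k] P, s (L x) = s (μ x) := by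
    intro x
    induction x using TensorProduct.induction_on with
    | zero => simp
    | tmul u v =>
      rw [hL_tmul, hμdef, LinearMap.mul'_apply, map_mul, map_mul, h_sB (s u) (hsB u)]
    | add x y hx hy => simp only [map_add, hx, hy]
  have hsΦ : ∀ a : A, s (Φ a) = algebraMap k P (Coalgebra.counit a) := by
    intro a
    rw [hΦa, hsL, hμσ, AlgHom.commutes]
  have h1 : ∀ (f : A →ₗ[k] P) (z : A ⊗[k] A),
      TensorProduct.map s.toLinearMap LinearMap.id (TensorProduct.map f LinearMap.id z)
        = TensorProduct.map (s.toLinearMap ∘ₗ f) LinearMap.id z := by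
    intro f z
    induction z using TensorProduct.induction_on with
    | zero => simp
    | tmul x y => simp
    | add x y hx hy => simp only [map_add, hx, hy]
  have h2' : ∀ z : A ⊗[k] A,
      TensorProduct.map (Algebra.linearMap k P ∘ₗ Coalgebra.counit) LinearMap.id z
        = (Algebra.linearMap k P).rTensor A (Coalgebra.counit.rTensor A z) := by
    intro z
    induction z using TensorProduct.induction_on with
    | zero => simp
    | tmul x y => simp
    | add x y hx hy => simp only [map_add, hx, hy]
  have hcompsΦ : s.toLinearMap ∘ₗ Φ = Algebra.linearMap k P ∘ₗ Coalgebra.counit :=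
    LinearMap.ext fun b => hsΦ b
  have hΘΦ : ∀ a : A,
      TensorProduct.map s.toLinearMap LinearMap.id (ΔR (Φ a)) = (1 : P) ⊗ₜ a := by
    intro a
    rw [clause2, h1, hcompsΦ, h2', Coalgebra.rTensor_counit_comul, LinearMap.rTensor_tmul]
    simp
  have clause6 : ∀ b : P, ΔR b = b ⊗ₜ 1 → ∀ a : A,
      TensorProduct.map s.toLinearMap LinearMap.id (ΔR (b * Φ a)) = b ⊗ₜ a := by
    intro b hb a
    rw [hmul, hb]
    have h3 : ∀ w : P ⊗[k] A,
        TensorProduct.map s.toLinearMap LinearMap.id ((b ⊗ₜ (1 : A)) * w)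
          = (LinearMap.mulLeft k b).rTensor A
              (TensorProduct.map s.toLinearMap LinearMap.id w) := by
      intro w
      induction w using TensorProduct.induction_on with
      | zero => simp
      | tmul p c => simp [Algebra.TensorProduct.tmul_mul_tmul, hsmod b hb]
      | add x y hx hy => simp only [mul_add, map_add, hx, hy]
    rw [h3, hΘΦ]
    simp
  have hΘinj : ∀ x y : P,
      TensorProduct.map s.toLinearMap LinearMap.id (ΔR x)
        = TensorProduct.map s.toLinearMap LinearMap.id (ΔR y) → x = y := by
    intro x y hxy
    have h4 := clause5 x
    rw [hxy, clause5 y] at h4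
    exact h4.symm
  have hmapS_mul : ∀ x y : P ⊗[k] A,
      TensorProduct.map s.toLinearMap LinearMap.id (x * y)
        = TensorProduct.map s.toLinearMap LinearMap.id x
          * TensorProduct.map s.toLinearMap LinearMap.id y := by
    intro x y
    induction x using TensorProduct.induction_on with
    | zero => simp
    | tmul p c =>
      induction y using TensorProduct.induction_on with
      | zero => simp
      | tmul q d => simp [Algebra.TensorProduct.tmul_mul_tmul, map_mul]
      | add x' y' hx hy => simp only [mul_add, map_add, hx, hy]
    | add x' y' hx hy => simp only [add_mul, map_add, hx, hy]
  have hΦmul : ∀ a b : A, Φ (a * b) = Φ a * Φ b := by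
    intro a b
    apply hΘinj
    rw [hΘΦ, hmul, hmapS_mul, hΘΦ, hΘΦ, Algebra.TensorProduct.tmul_mul_tmul, one_mul]
  have hμmapΦl : ∀ z : A ⊗[k] A,
      μ (TensorProduct.map Φ (Φ ∘ₗ HopfAlgebra.antipode (R := k)) z)
        = Φ (LinearMap.mul' k A ((HopfAlgebra.antipode (R := k)).lTensor A z)) := by
    intro z
    induction z using TensorProduct.induction_on with
    | zero => simp
    | tmul x y =>
      simp only [TensorProduct.map_tmul, LinearMap.lTensor_tmul, hμdef,
        LinearMap.mul'_apply, LinearMap.comp_apply]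
      rw [hΦmul]
    | add x y hx hy => simp only [map_add, hx, hy]
  have hμmapΦr : ∀ z : A ⊗[k] A,
      μ (TensorProduct.map (Φ ∘ₗ HopfAlgebra.antipode (R := k)) Φ z)
        = Φ (LinearMap.mul' k A ((HopfAlgebra.antipode (R := k)).rTensor A z)) := by
    intro z
    induction z using TensorProduct.induction_on with
    | zero => simp
    | tmul x y =>
      simp only [TensorProduct.map_tmul, LinearMap.rTensor_tmul, hμdef,
        LinearMap.mul'_apply, LinearMap.comp_apply]
      rw [hΦmul]
    | add x y hx hy => simp only [map_add, hx, hy]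
  have hΦalg : ∀ c : k, Φ (algebraMap k A c) = algebraMap k P c := by
    intro c
    rw [Algebra.algebraMap_eq_smul_one, map_smul, hΦ1, Algebra.algebraMap_eq_smul_one]
  refine ⟨hΦ1, clause2, ⟨Φ ∘ₗ HopfAlgebra.antipode (R := k), ?_, ?_⟩, clause4, clause5, clause6⟩
  · apply LinearMap.ext
    intro a
    show μ (TensorProduct.map Φ (Φ ∘ₗ HopfAlgebra.antipode (R := k)) (Coalgebra.comul a))
      = (Algebra.linearMap k P ∘ₗ Coalgebra.counit) a
    rw [hμmapΦl, HopfAlgebra.mul_antipode_lTensor_comul_apply, hΦalg]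
    rfl
  · apply LinearMap.ext
    intro a
    show μ (TensorProduct.map (Φ ∘ₗ HopfAlgebra.antipode (R := k)) Φ (Coalgebra.comul a))
      = (Algebra.linearMap k P ∘ₗ Coalgebra.counit) a
    rw [hμmapΦr, HopfAlgebra.mul_antipode_rTensor_comul_apply, hΦalg]
    rfl

end
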